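/- Let E be a Banach lattice, let S be a semigroup on E and assume that S(t) converges in operator norm to an operator P ∈ L(E) as t → ∞. Then there exist real numbers M ≥ 0 and δ > 0 such that ‖S(t) − P‖ ≤ M e^{−δ t} for all t ∈ (0,∞); that is, the convergence is exponentially fast. -/

import Mathlib

open Filter Topology Set

/-- If a semigroup `S` on a Banach lattice `E` converges in operator norm
to `P` as `t → ∞`, then the convergence is exponentially fast: there are `M ≥ 0` and
`δ > 0` with `‖S t − P‖ ≤ M e^{−δ t}` for all `t > 0`. -/
theorem statement3
    {E : Type*} [NormedAddCommGroup E] [Lattice E] [HasSolidNorm E] [IsOrderedAddMonoid E] [NormedSpace ℝ E] [CompleteSpace E]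
    (S : ℝ → E →L[ℝ] E)
    (hsg : ∀ s ∈ Ioi (0 : ℝ), ∀ t ∈ Ioi (0 : ℝ), S (s + t) = (S t).comp (S s))
    (hloc : ∃ C : ℝ, ∀ t ∈ Ioc (0 : ℝ) 1, ‖S t‖ ≤ C)
    (P : E →L[ℝ] E)
    (hP : Tendsto (fun t : ℝ => S t) atTop (𝓝 P)) :
    ∃ M : ℝ, 0 ≤ M ∧ ∃ δ : ℝ, 0 < δ ∧
      ∀ t ∈ Ioi (0 : ℝ), ‖S t - P‖ ≤ M * Real.exp (-δ * t) := by
  obtain ⟨C, hC⟩ := hloc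
  -- `S s ∘ P = P` for all `s > 0`
  have h1 : ∀ s, 0 < s → (S s).comp P = P := by
    intro s hs
    have ht1 : Tendsto (fun t : ℝ => S (t + s)) atTop (𝓝 P) :=
      hP.comp (tendsto_atTop_add_const_right atTop s tendsto_id)
    have ht2 : Tendsto (fun t : ℝ => (S s).comp (S t)) atTop (𝓝 ((S s).comp P)) :=
      (((ContinuousLinearMap.compL ℝ E E E) (S s)).continuous.tendsto P).comp hP
    have heq : ∀ᶠ t : ℝ in atTop, S (t + s) = (S s).comp (S t) := by
      filter_upwards [eventually_gt_atTop (0 : ℝ)] with t ht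
      exact hsg t ht s hs
    exact (tendsto_nhds_unique (ht1.congr' heq) ht2).symm
  -- `P ∘ S s = P` for all `s > 0`
  have h2 : ∀ s, 0 < s → P.comp (S s) = P := by
    intro s hs
    have ht1 : Tendsto (fun t : ℝ => S (s + t)) atTop (𝓝 P) :=
      hP.comp (tendsto_atTop_add_const_left atTop s tendsto_id)
    have ht2 : Tendsto (fun t : ℝ => (S t).comp (S s)) atTop (𝓝 (P.comp (S s))) :=
      ((((ContinuousLinearMap.compL ℝ E E E).flip (S s)).continuous.tendsto P).comp hP)
    have heq : ∀ᶠ t : ℝ in atTop, S (s + t) = (S t).comp (S s) := by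
      filter_upwards [eventually_gt_atTop (0 : ℝ)] with t ht
      exact hsg s hs t ht
    exact (tendsto_nhds_unique (ht1.congr' heq) ht2).symm
  -- `P ∘ P = P`
  have h3 : P.comp P = P := by
    have ht2 : Tendsto (fun s : ℝ => (S s).comp P) atTop (𝓝 (P.comp P)) :=
      ((((ContinuousLinearMap.compL ℝ E E E).flip P).continuous.tendsto P).comp hP)
    have heq : ∀ᶠ s : ℝ in atTop, (S s).comp P = P := by
      filter_upwards [eventually_gt_atTop (0 : ℝ)] with s hs
      exact h1 s hs
    exact tendsto_nhds_unique (ht2.congr' heq) tendsto_const_nhds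
  -- the semigroup law for `S t - P`
  have hR : ∀ s, 0 < s → ∀ t, 0 < t →
      S (s + t) - P = (S t - P).comp (S s - P) := by
    intro s hs t ht
    ext x
    have e1 := DFunLike.congr_fun (h1 t ht) x
    have e2 := DFunLike.congr_fun (h2 s hs) x
    have e3 := DFunLike.congr_fun h3 x
    simp only [ContinuousLinearMap.comp_apply] at e1 e2 e3
    simp only [ContinuousLinearMap.sub_apply, ContinuousLinearMap.comp_apply,
      hsg s hs t ht, map_sub, e1, e2, e3]
    abel
  -- pick `t₀ ≥ 1` with `‖S t₀ - P‖ ≤ 1/2`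
  obtain ⟨T, hT⟩ := Metric.tendsto_atTop.mp hP (1 / 2) (by norm_num)
  set t₀ : ℝ := max T 1 with ht₀def
  have ht₀1 : (1 : ℝ) ≤ t₀ := le_max_right _ _
  have ht₀pos : (0 : ℝ) < t₀ := lt_of_lt_of_le one_pos ht₀1
  have h0 : ‖S t₀ - P‖ ≤ 1 / 2 := by
    have := hT t₀ (le_max_left _ _)
    rw [dist_eq_norm] at this
    exact this.le
  -- uniform bound on bounded intervals
  set C' : ℝ := max C 1 with hC'def
  have hC'1 : (1 : ℝ) ≤ C' := le_max_right _ _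
  have hC'pos : (0 : ℝ) < C' := lt_of_lt_of_le one_pos hC'1
  have hgrow : ∀ k : ℕ, ∀ t : ℝ, 0 < t → t ≤ k → ‖S t‖ ≤ C' ^ k := by
    intro k
    induction k with
    | zero =>
      intro t h1' h2'
      norm_num at h2'
      linarith
    | succ k ih =>
      intro t htpos htle
      by_cases h : t ≤ 1
      · calc ‖S t‖ ≤ C := hC t ⟨htpos, h⟩
          _ ≤ C' := le_max_left _ _
          _ ≤ C' ^ (k + 1) := le_self_pow₀ hC'1 (Nat.succ_ne_zero k)
      · push_neg at h
        have hdec : S t = (S 1).comp (S (t - 1)) := by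
          have := hsg (t - 1) (by simp; linarith) 1 (by simp)
          simpa using this
        have htk : t - 1 ≤ k := by
          push_cast at htle ⊢
          linarith
        calc ‖S t‖ = ‖(S 1).comp (S (t - 1))‖ := by rw [hdec]
          _ ≤ ‖S 1‖ * ‖S (t - 1)‖ := ContinuousLinearMap.opNorm_comp_le _ _
          _ ≤ C' * C' ^ k := by
              apply mul_le_mul _ (ih (t - 1) (by linarith) htk) (norm_nonneg _)
                hC'pos.le
              exact (hC 1 ⟨one_pos, le_refl 1⟩).trans (le_max_left _ _)
          _ = C' ^ (k + 1) := (pow_succ' C' k).symm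
  set K : ℕ := ⌈t₀⌉₊ with hKdef
  set B : ℝ := C' ^ K + ‖P‖ with hBdef
  have hB0 : 0 ≤ B := add_nonneg (pow_nonneg hC'pos.le _) (norm_nonneg _)
  have hB : ∀ r : ℝ, 0 < r → r ≤ t₀ → ‖S r - P‖ ≤ B := by
    intro r hr0 hr1
    calc ‖S r - P‖ ≤ ‖S r‖ + ‖P‖ := norm_sub_le _ _
      _ ≤ C' ^ K + ‖P‖ :=
        add_le_add (hgrow K r hr0 (hr1.trans (Nat.le_ceil t₀))) le_rfl
  -- geometric decay along multiples of t₀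
  have hpow : ∀ n : ℕ, ∀ r : ℝ, 0 < r →
      ‖S ((n : ℝ) * t₀ + r) - P‖ ≤ (1 / 2 : ℝ) ^ n * ‖S r - P‖ := by
    intro n
    induction n with
    | zero => intro r hr; simp
    | succ n ih =>
      intro r hr
      have hs : (0 : ℝ) < (n : ℝ) * t₀ + r := by positivity
      have key : ((n : ℝ) + 1) * t₀ + r = ((n : ℝ) * t₀ + r) + t₀ := by ring
      calc ‖S (((n : ℕ) + 1 : ℕ) * t₀ + r) - P‖
          = ‖S (((n : ℝ) * t₀ + r) + t₀) - P‖ := by push_cast; rw [key]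
        _ = ‖(S t₀ - P).comp (S ((n : ℝ) * t₀ + r) - P)‖ := by
            rw [hR _ hs _ ht₀pos]
        _ ≤ ‖S t₀ - P‖ * ‖S ((n : ℝ) * t₀ + r) - P‖ :=
            ContinuousLinearMap.opNorm_comp_le _ _
        _ ≤ (1 / 2) * ((1 / 2 : ℝ) ^ n * ‖S r - P‖) := by
            apply mul_le_mul h0 (ih r hr) (norm_nonneg _) (by norm_num)
        _ = (1 / 2 : ℝ) ^ (n + 1) * ‖S r - P‖ := by ring
  refine ⟨2 * B, by linarith, Real.log 2 / t₀, div_pos (Real.log_pos one_lt_two) ht₀pos, ?_⟩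
  intro t ht
  rw [mem_Ioi] at ht
  set m : ℕ := ⌈t / t₀⌉₊ with hmdef
  have hm1 : 1 ≤ m := Nat.one_le_iff_ne_zero.mpr (by
    simp only [hmdef, ne_eq, Nat.ceil_eq_zero, not_le]
    exact div_pos ht ht₀pos)
  set n : ℕ := m - 1 with hndef
  have hmn : m = n + 1 := (Nat.succ_pred_eq_of_pos hm1).symm
  have hlt : (n : ℝ) < t / t₀ := by
    rw [← Nat.lt_ceil, ← hmdef, hmn]
    omega
  have hle : t / t₀ ≤ (n : ℝ) + 1 := by
    have := Nat.le_ceil (t / t₀)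
    rw [← hmdef, hmn] at this
    push_cast at this
    linarith
  have hr0 : 0 < t - (n : ℝ) * t₀ := by
    have := (lt_div_iff₀ ht₀pos).mp hlt
    linarith
  have hr1 : t - (n : ℝ) * t₀ ≤ t₀ := by
    have := (div_le_iff₀ ht₀pos).mp hle
    nlinarith
  have hbound : ‖S t - P‖ ≤ (1 / 2 : ℝ) ^ n * B := by
    have := hpow n (t - (n : ℝ) * t₀) hr0
    have harg : (n : ℝ) * t₀ + (t - (n : ℝ) * t₀) = t := by ring
    rw [harg] at this
    exact this.trans (mul_le_mul_of_nonneg_left (hB _ hr0 hr1) (by positivity))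
  have hexp : (1 / 2 : ℝ) ^ (n + 1) ≤ Real.exp (-(Real.log 2 / t₀) * t) := by
    have hkey : Real.exp (-(Real.log 2 * ((n : ℝ) + 1))) = (1 / 2 : ℝ) ^ (n + 1) := by
      rw [Real.exp_neg, mul_comm,
        show ((n : ℝ) + 1) = ((n + 1 : ℕ) : ℝ) by push_cast; ring,
        Real.exp_nat_mul, Real.exp_log (by norm_num : (0:ℝ) < 2)]
      simp [one_div, inv_pow]
    have ht' : t ≤ ((n : ℝ) + 1) * t₀ := (div_le_iff₀ ht₀pos).mp hle
    have hmono : -(Real.log 2 * ((n : ℝ) + 1)) ≤ -(Real.log 2 / t₀) * t := by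
      have hl2 : (0 : ℝ) < Real.log 2 := Real.log_pos one_lt_two
      rw [neg_mul, neg_le_neg_iff]
      calc Real.log 2 / t₀ * t ≤ Real.log 2 / t₀ * (((n : ℝ) + 1) * t₀) :=
            mul_le_mul_of_nonneg_left ht' (by positivity)
        _ = Real.log 2 * ((n : ℝ) + 1) := by field_simp
    rw [← hkey]
    exact Real.exp_le_exp.mpr hmono
  calc ‖S t - P‖ ≤ (1 / 2 : ℝ) ^ n * B := hbound
    _ = 2 * B * (1 / 2 : ℝ) ^ (n + 1) := by ring
    _ ≤ 2 * B * Real.exp (-(Real.log 2 / t₀) * t) :=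
        mul_le_mul_of_nonneg_left hexp (by linarith)
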